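/- (Divergence of the bubble diagram.) Let α ∈ (0, 1/4) and let ξ ∈ ℝ, ξ ≠ 0. Then the limit as Λ → ∞ of Λ^{4α−1} · ∫_{{ξ₁ : |ξ₁| ≤ Λ, |ξ₁| < |ξ − ξ₁|}} |ξ₁|^{1−2α} |ξ − ξ₁|^{−1−2α} dξ₁ exists and equals 1/(1 − 4α). In particular, the bubble integral ∫_{|ξ₁| < |ξ−ξ₁|}^{|ξ₁| ≤ Λ} |ξ₁|^{1−2α}|ξ−ξ₁|^{−1−2α} dξ₁ diverges like Λ^{1−4α} as the ultra-violet cut-off Λ tends to infinity, at a rate independent of the external momentum ξ. -/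

import Mathlib

open MeasureTheory Filter

private lemma bubble_meas_rpow (q : ℝ) : Measurable fun x : ℝ => x ^ q :=
  measurable_of_continuousOn_compl_singleton 0 fun x hx =>
    (Real.continuousAt_rpow_const x q (Or.inl hx)).continuousWithinAt

private lemma bubble_setMeasurable (ξ Λ : ℝ) :
    MeasurableSet {x : ℝ | |x| ≤ Λ ∧ |x| < |ξ - x|} :=
  (measurableSet_le measurable_abs measurable_const).inter
    (measurableSet_lt measurable_abs ((measurable_const.sub measurable_id).abs))

private lemma bubble_stepA (α ξ : ℝ) (Λ : ℝ) (hΛ : 0 < Λ) :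
    Λ ^ (4 * α - 1) * ∫ x in {x : ℝ | |x| ≤ Λ ∧ |x| < |ξ - x|},
        |x| ^ (1 - 2 * α) * |ξ - x| ^ (-1 - 2 * α)
    = ∫ u, Set.indicator {u : ℝ | |u| ≤ 1 ∧ |u| < |ξ / Λ - u|}
        (fun u => |u| ^ (1 - 2 * α) * |ξ / Λ - u| ^ (-1 - 2 * α)) u := by
  rw [← integral_indicator (bubble_setMeasurable ξ Λ)]
  have hcomp := MeasureTheory.Measure.integral_comp_mul_left
    (Set.indicator {x : ℝ | |x| ≤ Λ ∧ |x| < |ξ - x|}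
      (fun x => |x| ^ (1 - 2 * α) * |ξ - x| ^ (-1 - 2 * α))) Λ
  rw [abs_of_pos (inv_pos.2 hΛ), smul_eq_mul] at hcomp
  have h2 : (∫ x, Set.indicator {x : ℝ | |x| ≤ Λ ∧ |x| < |ξ - x|}
      (fun x => |x| ^ (1 - 2 * α) * |ξ - x| ^ (-1 - 2 * α)) x)
      = Λ * ∫ u, Set.indicator {x : ℝ | |x| ≤ Λ ∧ |x| < |ξ - x|}
        (fun x => |x| ^ (1 - 2 * α) * |ξ - x| ^ (-1 - 2 * α)) (Λ * u) := by
    rw [hcomp]; field_simp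
  rw [h2, ← mul_assoc]
  have h3 : Λ ^ (4 * α - 1) * Λ = Λ ^ (4 * α) := by
    nth_rewrite 2 [show Λ = Λ ^ (1:ℝ) from (Real.rpow_one Λ).symm]
    rw [← Real.rpow_add hΛ]; norm_num
  rw [h3, ← integral_const_mul]
  refine integral_congr_ae (Filter.Eventually.of_forall fun u => ?_)
  dsimp only
  have h1 : |Λ * u| = Λ * |u| := by rw [abs_mul, abs_of_pos hΛ]
  have hfac : ξ - Λ * u = Λ * (ξ / Λ - u) := by field_simp
  have h4 : |ξ - Λ * u| = Λ * |ξ / Λ - u| := by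
    rw [hfac, abs_mul, abs_of_pos hΛ]
  have hmem : (Λ * u ∈ {x : ℝ | |x| ≤ Λ ∧ |x| < |ξ - x|}) ↔
      (u ∈ {u : ℝ | |u| ≤ 1 ∧ |u| < |ξ / Λ - u|}) := by
    simp only [Set.mem_setOf_eq, h1, h4]
    exact and_congr (mul_le_iff_le_one_right hΛ) (mul_lt_mul_iff_right₀ hΛ)
  by_cases hu : u ∈ {u : ℝ | |u| ≤ 1 ∧ |u| < |ξ / Λ - u|}
  · rw [Set.indicator_of_mem (hmem.2 hu), Set.indicator_of_mem hu]
    rw [h1, h4, Real.mul_rpow hΛ.le (abs_nonneg u), Real.mul_rpow hΛ.le (abs_nonneg _)]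
    have h5 : Λ ^ (4 * α) * Λ ^ (1 - 2 * α) * Λ ^ (-1 - 2 * α) = 1 := by
      rw [← Real.rpow_add hΛ, ← Real.rpow_add hΛ,
        show 4 * α + (1 - 2 * α) + (-1 - 2 * α) = 0 by ring, Real.rpow_zero]
    calc Λ ^ (4 * α) * (Λ ^ (1 - 2 * α) * |u| ^ (1 - 2 * α) *
          (Λ ^ (-1 - 2 * α) * |ξ / Λ - u| ^ (-1 - 2 * α)))
        = (Λ ^ (4 * α) * Λ ^ (1 - 2 * α) * Λ ^ (-1 - 2 * α)) *
          (|u| ^ (1 - 2 * α) * |ξ / Λ - u| ^ (-1 - 2 * α)) := by ring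
      _ = |u| ^ (1 - 2 * α) * |ξ / Λ - u| ^ (-1 - 2 * α) := by rw [h5, one_mul]
  · rw [Set.indicator_of_notMem (fun h => hu (hmem.1 h)), Set.indicator_of_notMem hu,
      mul_zero]

private lemma bubble_stepB (α ξ : ℝ) (hα0 : 0 < α) (hα4 : α < 1/4) (hξ : 0 < ξ) :
    Tendsto (fun Λ : ℝ => ∫ u, Set.indicator {u : ℝ | |u| ≤ 1 ∧ |u| < |ξ / Λ - u|}
        (fun u => |u| ^ (1 - 2 * α) * |ξ / Λ - u| ^ (-1 - 2 * α)) u)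
      atTop (nhds (∫ u, Set.indicator (Set.Ioo (-1:ℝ) 0) (fun u => |u| ^ (-(4 * α))) u)) := by
  have hT : ∀ Λ : ℝ, MeasurableSet {u : ℝ | |u| ≤ 1 ∧ |u| < |ξ / Λ - u|} := fun Λ =>
    (measurableSet_le measurable_abs measurable_const).inter
      (measurableSet_lt measurable_abs ((measurable_const.sub measurable_id).abs))
  apply tendsto_integral_filter_of_dominated_convergence
    (Set.indicator (Set.Icc (-1:ℝ) 1) fun u => |u| ^ (-(4 * α)))
  · -- measurability
    refine Filter.Eventually.of_forall fun Λ =>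
      (Measurable.indicator ?_ (hT Λ)).aestronglyMeasurable
    exact ((bubble_meas_rpow _).comp measurable_abs).mul
      ((bubble_meas_rpow _).comp ((measurable_const.sub measurable_id).abs))
  · -- bound
    refine Filter.Eventually.of_forall fun Λ => Filter.Eventually.of_forall fun u => ?_
    by_cases hu : u ∈ {u : ℝ | |u| ≤ 1 ∧ |u| < |ξ / Λ - u|}
    · rw [Set.indicator_of_mem hu]
      have h01 : u ∈ Set.Icc (-1:ℝ) 1 := abs_le.1 hu.1
      rw [Set.indicator_of_mem h01, Real.norm_eq_abs,
        abs_of_nonneg (mul_nonneg (Real.rpow_nonneg (abs_nonneg u) _)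
          (Real.rpow_nonneg (abs_nonneg _) _))]
      by_cases hu0 : u = 0
      · subst hu0
        rw [abs_zero, Real.zero_rpow (by norm_num; linarith), zero_mul,
          Real.zero_rpow (by norm_num; linarith)]
      · have habs : 0 < |u| := abs_pos.2 hu0
        have hle : |ξ / Λ - u| ^ (-1 - 2 * α) ≤ |u| ^ (-1 - 2 * α) :=
          Real.rpow_le_rpow_of_nonpos habs hu.2.le (by linarith)
        calc |u| ^ (1 - 2 * α) * |ξ / Λ - u| ^ (-1 - 2 * α)
            ≤ |u| ^ (1 - 2 * α) * |u| ^ (-1 - 2 * α) :=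
              mul_le_mul_of_nonneg_left hle (Real.rpow_nonneg (abs_nonneg u) _)
          _ = |u| ^ (-(4 * α)) := by
              rw [← Real.rpow_add habs]; congr 1; ring
    · rw [Set.indicator_of_notMem hu, norm_zero]
      exact Set.indicator_nonneg (fun u _ => Real.rpow_nonneg (abs_nonneg u) _) u
  · -- bound integrable
    rw [integrable_indicator_iff measurableSet_Icc, integrableOn_Icc_iff_integrableOn_Ioc]
    have hII : IntervalIntegrable (fun u : ℝ => |u| ^ (-(4 * α))) volume 0 1 := by
      have h := intervalIntegral.intervalIntegrable_rpow' (a := 0) (b := 1)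
        (by linarith : (-1:ℝ) < -(4 * α))
      rw [intervalIntegrable_iff] at h ⊢
      refine h.congr_fun (fun u hu => ?_) measurableSet_uIoc
      rw [Set.uIoc_of_le (by norm_num : (0:ℝ) ≤ 1)] at hu
      rw [abs_of_pos hu.1]
    have hIIneg : IntervalIntegrable (fun u : ℝ => |u| ^ (-(4 * α))) volume (-1) 0 := by
      have h := (IntervalIntegrable.iff_comp_neg (f := fun u : ℝ => |u| ^ (-(4 * α)))).mp hII
      simp only [abs_neg, neg_zero] at h
      exact h.symm
    exact (hIIneg.trans hII).1
  · -- pointwise limit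
    have hae : ∀ᵐ u : ℝ, u ∉ ({-1, 0, 1} : Set ℝ) :=
      measure_eq_zero_iff_ae_notMem.1 ((Set.toFinite _).measure_zero volume)
    filter_upwards [hae] with u hu
    simp only [Set.mem_insert_iff, Set.mem_singleton_iff, not_or] at hu
    obtain ⟨hun1, hu0, hu1⟩ := hu
    rcases lt_trichotomy (|u|) 1 with habs | habs | habs
    · rcases lt_trichotomy u 0 with hneg | hzero | hpos
      · -- u ∈ (-1, 0)
        have hmem : ∀ Λ : ℝ, 0 < Λ → u ∈ {u : ℝ | |u| ≤ 1 ∧ |u| < |ξ / Λ - u|} := by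
          intro Λ hΛ
          refine ⟨habs.le, ?_⟩
          have h1 : 0 < ξ / Λ := div_pos hξ hΛ
          rw [abs_of_neg hneg, abs_of_pos (by linarith : 0 < ξ / Λ - u)]
          linarith
        have hIoo : u ∈ Set.Ioo (-1:ℝ) 0 := ⟨by cases abs_lt.1 habs; linarith, hneg⟩
        rw [Set.indicator_of_mem hIoo]
        have hlim : Tendsto (fun Λ : ℝ => |u| ^ (1 - 2 * α) * |ξ / Λ - u| ^ (-1 - 2 * α))
            atTop (nhds (|u| ^ (-(4 * α)))) := by
          have t1 : Tendsto (fun Λ : ℝ => ξ / Λ - u) atTop (nhds (0 - u)) :=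
            (Tendsto.div_atTop tendsto_const_nhds tendsto_id).sub_const u
          have t2 : Tendsto (fun Λ : ℝ => |ξ / Λ - u|) atTop (nhds |u|) := by
            have := t1.abs
            rwa [zero_sub, abs_neg] at this
          have t3 : Tendsto (fun Λ : ℝ => |ξ / Λ - u| ^ (-1 - 2 * α)) atTop
              (nhds (|u| ^ (-1 - 2 * α))) :=
            ((Real.continuousAt_rpow_const _ _ (Or.inl (abs_ne_zero.2 hu0))).tendsto).comp t2
          have t4 := t3.const_mul (|u| ^ (1 - 2 * α))
          have heq : |u| ^ (1 - 2 * α) * |u| ^ (-1 - 2 * α) = |u| ^ (-(4 * α)) := by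
            rw [← Real.rpow_add (abs_pos.2 hu0)]; congr 1; ring
          rwa [heq] at t4
        refine hlim.congr' ?_
        filter_upwards [eventually_gt_atTop (0:ℝ)] with Λ hΛ
        rw [Set.indicator_of_mem (hmem Λ hΛ)]
      · exact absurd hzero hu0
      · -- u ∈ (0,1)
        have hIoo : u ∉ Set.Ioo (-1:ℝ) 0 := fun h => absurd h.2 (not_lt.2 hpos.le)
        rw [Set.indicator_of_notMem hIoo]
        have t1 : Tendsto (fun Λ : ℝ => ξ / Λ) atTop (nhds 0) :=
          Tendsto.div_atTop tendsto_const_nhds tendsto_id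
        refine Tendsto.congr' ?_ tendsto_const_nhds
        filter_upwards [eventually_gt_atTop (0:ℝ),
          t1.eventually_lt_const (by linarith : (0:ℝ) < 2 * u)] with Λ hΛ ht2
        have ht0 : 0 < ξ / Λ := div_pos hξ hΛ
        have hnot : ¬ (|u| < |ξ / Λ - u|) := by
          rw [abs_of_pos hpos, not_lt]
          exact (abs_lt.2 ⟨by linarith, by linarith⟩ : |ξ / Λ - u| < u).le
        rw [Set.indicator_of_notMem (fun h => hnot h.2)]
    · exact absurd (abs_eq (by norm_num : (0:ℝ) ≤ 1) |>.1 habs) (by tauto)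
    · -- |u| > 1
      have hIoo : u ∉ Set.Ioo (-1:ℝ) 0 := by
        intro h
        rcases h with ⟨h1, h2⟩
        rw [abs_of_neg h2] at habs; linarith
      rw [Set.indicator_of_notMem hIoo]
      refine Tendsto.congr' ?_ tendsto_const_nhds
      exact Filter.Eventually.of_forall fun Λ =>
        (Set.indicator_of_notMem (fun h => absurd h.1 (not_le.2 habs)) _).symm

private lemma bubble_limit_integral (c : ℝ) (hc : -1 < c) (hcc : c + 1 ≠ 0) :
    ∫ u, Set.indicator (Set.Ioo (-1:ℝ) 0) (fun u => |u| ^ c) u = 1 / (c + 1) := by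
  rw [integral_indicator measurableSet_Ioo, ← integral_Ioc_eq_integral_Ioo,
    ← intervalIntegral.integral_of_le (by norm_num : (-1:ℝ) ≤ 0)]
  have h1 : (∫ u in (-1:ℝ)..0, |u| ^ c) = ∫ u in (-1:ℝ)..0, (fun v : ℝ => |v| ^ c) (-u) := by
    apply intervalIntegral.integral_congr
    intro u _
    simp [abs_neg]
  rw [h1, intervalIntegral.integral_comp_neg fun v : ℝ => |v| ^ c]
  norm_num
  rw [intervalIntegral.integral_congr (g := fun u : ℝ => u ^ c)
    (fun u hu => by
      rw [Set.uIcc_of_le (by norm_num : (0:ℝ) ≤ 1)] at hu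
      simp [abs_of_nonneg hu.1]),
    integral_rpow (Or.inl hc)]
  rw [Real.zero_rpow hcc, Real.one_rpow]
  norm_num

private lemma bubble_aux (α : ℝ) (hα : α ∈ Set.Ioo (0:ℝ) (1/4)) (ξ : ℝ) (hξ : 0 < ξ) :
    Tendsto
      (fun Λ : ℝ => Λ ^ (4 * α - 1) *
        ∫ ξ₁ in {x : ℝ | |x| ≤ Λ ∧ |x| < |ξ - x|},
          |ξ₁| ^ (1 - 2 * α) * |ξ - ξ₁| ^ (-1 - 2 * α))
      atTop (nhds (1 / (1 - 4 * α))) := by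
  obtain ⟨hα0, hα4⟩ := hα
  have hB := bubble_stepB α ξ hα0 hα4 hξ
  rw [bubble_limit_integral (-(4 * α)) (by linarith) (by intro h; nlinarith),
    show -(4 * α) + 1 = 1 - 4 * α by ring] at hB
  refine hB.congr' ?_
  filter_upwards [eventually_gt_atTop (0:ℝ)] with Λ hΛ
  exact (bubble_stepA α ξ Λ hΛ).symm

/-- Divergence of the bubble diagram: for `α ∈ (0, 1/4)` and external momentum `ξ ≠ 0`,
`Λ^{4α−1} ∫_{|ξ₁| ≤ Λ, |ξ₁| < |ξ−ξ₁|} |ξ₁|^{1−2α} |ξ−ξ₁|^{−1−2α} dξ₁ → 1/(1−4α)`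
as the ultra-violet cut-off `Λ → ∞`; in particular the bubble integral diverges like
`Λ^{1−4α}` at a rate independent of `ξ`. -/
theorem bubble_divergence (α : ℝ) (hα : α ∈ Set.Ioo (0:ℝ) (1/4)) (ξ : ℝ) (hξ : ξ ≠ 0) :
    Tendsto
      (fun Λ : ℝ => Λ ^ (4 * α - 1) *
        ∫ ξ₁ in {x : ℝ | |x| ≤ Λ ∧ |x| < |ξ - x|},
          |ξ₁| ^ (1 - 2 * α) * |ξ - ξ₁| ^ (-1 - 2 * α))
      atTop (nhds (1 / (1 - 4 * α))) := by
  rcases hξ.lt_or_gt with hneg | hpos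
  · -- reduce ξ < 0 to -ξ > 0 via the substitution x ↦ -x
    have key : ∀ Λ : ℝ,
        (∫ ξ₁ in {x : ℝ | |x| ≤ Λ ∧ |x| < |ξ - x|},
          |ξ₁| ^ (1 - 2 * α) * |ξ - ξ₁| ^ (-1 - 2 * α))
        = ∫ ξ₁ in {x : ℝ | |x| ≤ Λ ∧ |x| < |(-ξ) - x|},
          |ξ₁| ^ (1 - 2 * α) * |(-ξ) - ξ₁| ^ (-1 - 2 * α) := by
      intro Λ
      rw [← integral_indicator (bubble_setMeasurable ξ Λ),
        ← integral_indicator (bubble_setMeasurable (-ξ) Λ)]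
      have hptw : ∀ x : ℝ,
          Set.indicator {y : ℝ | |y| ≤ Λ ∧ |y| < |ξ - y|}
            (fun y => |y| ^ (1 - 2 * α) * |ξ - y| ^ (-1 - 2 * α)) x
          = Set.indicator {y : ℝ | |y| ≤ Λ ∧ |y| < |(-ξ) - y|}
            (fun y => |y| ^ (1 - 2 * α) * |(-ξ) - y| ^ (-1 - 2 * α)) (-x) := by
        intro x
        have habs2 : |(-ξ) - (-x)| = |ξ - x| := by
          rw [show (-ξ) - (-x) = -(ξ - x) by ring, abs_neg]
        have hmem : ((-x) ∈ {y : ℝ | |y| ≤ Λ ∧ |y| < |(-ξ) - y|}) ↔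
            (x ∈ {y : ℝ | |y| ≤ Λ ∧ |y| < |ξ - y|}) := by
          simp only [Set.mem_setOf_eq, abs_neg, habs2]
        by_cases hx : x ∈ {y : ℝ | |y| ≤ Λ ∧ |y| < |ξ - y|}
        · rw [Set.indicator_of_mem hx, Set.indicator_of_mem (hmem.2 hx)]
          rw [abs_neg, habs2]
        · rw [Set.indicator_of_notMem hx,
            Set.indicator_of_notMem (fun h => hx (hmem.1 h))]
      calc (∫ x, Set.indicator {y : ℝ | |y| ≤ Λ ∧ |y| < |ξ - y|}
              (fun y => |y| ^ (1 - 2 * α) * |ξ - y| ^ (-1 - 2 * α)) x)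
          = ∫ x, Set.indicator {y : ℝ | |y| ≤ Λ ∧ |y| < |(-ξ) - y|}
              (fun y => |y| ^ (1 - 2 * α) * |(-ξ) - y| ^ (-1 - 2 * α)) ((-1) * x) := by
            refine integral_congr_ae (Filter.Eventually.of_forall fun x => ?_)
            dsimp only
            rw [neg_one_mul]
            exact hptw x
        _ = ∫ x, Set.indicator {y : ℝ | |y| ≤ Λ ∧ |y| < |(-ξ) - y|}
              (fun y => |y| ^ (1 - 2 * α) * |(-ξ) - y| ^ (-1 - 2 * α)) x := by
            rw [MeasureTheory.Measure.integral_comp_mul_left]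
            norm_num
    have := bubble_aux α hα (-ξ) (by linarith)
    refine this.congr ?_
    intro Λ
    rw [key Λ]
  · exact bubble_aux α hα ξ hpos
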